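/- arXiv:1609.03989 — 4 statements merged into one kernel-verified Lean document; each statement's English description precedes it below -/
import Mathlib

section
/- Let E, v, w ∈ ℝ^3 (with E playing the role of E(x), v + w the perturbation direction) and p > 2, t ≥ 0. Define φ(t) = -⟨|E|^{p-2}E, ((t^2-1)/2)E + t(v+w)⟩ - (1/p)|E|^p + (1/p)|tE + v + w|^p. Then φ(t) ≥ 0 for all t ≥ 0, with strict inequality unless E = tE + v + w (when v + w ≠ 0 or t ≠ 1). -/
open RealInnerProductSpace

/-- Scalar key inequality (Bernoulli): `s^p ≥ 1 + (p/2)(s²-1)` for `s ≥ 0`, `p > 2`. -/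
lemma aux_k_nonneg {p s : ℝ} (hp : 2 < p) (hs : 0 ≤ s) :
    1 + p / 2 * (s ^ 2 - 1) ≤ s ^ p := by
  have h1 : (-1 : ℝ) ≤ s ^ 2 - 1 := by nlinarith
  have h2 : (1 : ℝ) ≤ p / 2 := by linarith
  have h := one_add_mul_self_le_rpow_one_add h1 h2
  have hrw : (1 + (s ^ 2 - 1)) ^ (p / 2) = s ^ p := by
    have hb : (1 : ℝ) + (s ^ 2 - 1) = s ^ (2 : ℝ) := by
      rw [show ((2:ℝ)) = ((2:ℕ):ℝ) by norm_num, Real.rpow_natCast]; ring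
    rw [hb, ← Real.rpow_mul hs]
    congr 1
    ring
  linarith [hrw ▸ h]

/-- Strict version for `s ≠ 1`. -/
lemma aux_k_pos {p s : ℝ} (hp : 2 < p) (hs : 0 ≤ s) (hs1 : s ≠ 1) :
    1 + p / 2 * (s ^ 2 - 1) < s ^ p := by
  have h1 : (-1 : ℝ) ≤ s ^ 2 - 1 := by nlinarith
  have h1' : s ^ 2 - 1 ≠ 0 := by
    intro h
    exact hs1 (by nlinarith)
  have h2 : (1 : ℝ) < p / 2 := by linarith
  have h := one_add_mul_self_lt_rpow_one_add h1 h1' h2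
  have hrw : (1 + (s ^ 2 - 1)) ^ (p / 2) = s ^ p := by
    have hb : (1 : ℝ) + (s ^ 2 - 1) = s ^ (2 : ℝ) := by
      rw [show ((2:ℝ)) = ((2:ℕ):ℝ) by norm_num, Real.rpow_natCast]; ring
    rw [hb, ← Real.rpow_mul hs]
    congr 1
    ring
  linarith [hrw ▸ h]

/-- Pointwise inequality of Lemma 4.1: for `E, v, w ∈ ℝ³`, `p > 2`, `t ≥ 0`, the quantity
`φ(t) = -⟨|E|^{p-2}E, ((t²-1)/2)E + t(v+w)⟩ - (1/p)|E|^p + (1/p)|tE + v + w|^p`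
is nonnegative, and strictly positive unless `E = tE + v + w`. -/
theorem stmt2 (p t : ℝ) (hp : 2 < p) (ht : 0 ≤ t)
    (E v w : EuclideanSpace ℝ (Fin 3)) :
    0 ≤ -⟪‖E‖ ^ (p - 2) • E, ((t ^ 2 - 1) / 2) • E + t • (v + w)⟫
          - (1 / p) * ‖E‖ ^ p + (1 / p) * ‖t • E + (v + w)‖ ^ p ∧
      (E ≠ t • E + (v + w) →
        0 < -⟪‖E‖ ^ (p - 2) • E, ((t ^ 2 - 1) / 2) • E + t • (v + w)⟫
              - (1 / p) * ‖E‖ ^ p + (1 / p) * ‖t • E + (v + w)‖ ^ p) := by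
  have hp0 : (0:ℝ) < p := by linarith
  have h1p : (0:ℝ) < 1 / p := by positivity
  set u : EuclideanSpace ℝ (Fin 3) := t • E + (v + w) with hu
  by_cases hE : E = 0
  · -- degenerate case E = 0
    subst hE
    have hz2 : ‖(0 : EuclideanSpace ℝ (Fin 3))‖ ^ p = 0 := by
      rw [norm_zero, Real.zero_rpow hp0.ne']
    have hz3 : (‖(0 : EuclideanSpace ℝ (Fin 3))‖ ^ (p - 2)) • (0 : EuclideanSpace ℝ (Fin 3))
        = 0 := smul_zero _
    rw [hz3, hz2, inner_zero_left]
    constructor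
    · have := mul_nonneg h1p.le (Real.rpow_nonneg (norm_nonneg u) p)
      linarith
    · intro hne
      have hu0 : u ≠ 0 := fun h => hne h.symm
      have := mul_pos h1p (Real.rpow_pos_of_pos (norm_pos_iff.mpr hu0) p)
      linarith
  · -- main case E ≠ 0
    have ha : (0:ℝ) < ‖E‖ := norm_pos_iff.mpr hE
    set a : ℝ := ‖E‖ with haa
    set r : ℝ := ‖u‖ with hrr
    have hr0 : 0 ≤ r := norm_nonneg u
    set c : ℝ := ⟪E, u⟫ with hcc
    set s : ℝ := r / a with hss
    have hs0 : 0 ≤ s := div_nonneg hr0 ha.le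
    have hrs : r = s * a := by rw [hss, div_mul_cancel₀ r ha.ne']
    -- rpow facts
    have hap : a ^ (p - 2) * a ^ (2:ℕ) = a ^ p := by
      rw [← Real.rpow_natCast a 2, ← Real.rpow_add ha]
      norm_num
    have hrp : r ^ p = s ^ p * a ^ p := by
      rw [hrs, Real.mul_rpow hs0 ha.le]
    have hapos : (0:ℝ) < a ^ p := Real.rpow_pos_of_pos ha p
    have hap2 : (0:ℝ) < a ^ (p - 2) := Real.rpow_pos_of_pos ha (p - 2)
    -- expand the inner product
    have hEE : ⟪E, E⟫ = a ^ (2:ℕ) := real_inner_self_eq_norm_sq E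
    have hEvw : ⟪E, v + w⟫ = c - t * (a ^ (2:ℕ)) := by
      have h0 : ⟪E, u⟫ = t * ⟪E, E⟫ + ⟪E, v + w⟫ := by
        rw [hu, inner_add_right, real_inner_smul_right]
      linear_combination -h0 - hcc - t * hEE
    have hinner : ⟪(a ^ (p - 2)) • E, ((t ^ 2 - 1) / 2) • E + t • (v + w)⟫
        = a ^ (p - 2) * ((t ^ 2 - 1) / 2 * a ^ (2:ℕ) + t * (c - t * a ^ (2:ℕ))) := by
      rw [real_inner_smul_left, inner_add_right, real_inner_smul_right,
        real_inner_smul_right]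
      linear_combination (a ^ (p - 2) * (t ^ 2 - 1) / 2) * hEE + (a ^ (p - 2) * t) * hEvw
    -- the main identity
    have hmain : -⟪(a ^ (p - 2)) • E, ((t ^ 2 - 1) / 2) • E + t • (v + w)⟫
          - (1 / p) * a ^ p + (1 / p) * r ^ p
        = a ^ p * (s ^ p / p - t * s + (t ^ 2 + 1) / 2 - 1 / p)
          + t * a ^ (p - 2) * (a * r - c) := by
      rw [hinner, hrp, hrs]
      linear_combination ((t ^ 2 + 1) / 2 - t * s) * hap
    -- scalar lower bounds
    have hk : 0 ≤ s ^ p / p - s ^ 2 / 2 + 1 / 2 - 1 / p := by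
      have h := aux_k_nonneg hp hs0
      have h2 : 0 ≤ (s ^ p - (1 + p / 2 * (s ^ 2 - 1))) / p :=
        div_nonneg (by linarith) hp0.le
      have h3 : (s ^ p - (1 + p / 2 * (s ^ 2 - 1))) / p
          = s ^ p / p - s ^ 2 / 2 + 1 / 2 - 1 / p := by
        field_simp
        ring
      linarith [h3 ▸ h2]
    have hGsplit : s ^ p / p - t * s + (t ^ 2 + 1) / 2 - 1 / p
        = (s ^ p / p - s ^ 2 / 2 + 1 / 2 - 1 / p) + (t - s) ^ 2 / 2 := by ring
    have hG : 0 ≤ s ^ p / p - t * s + (t ^ 2 + 1) / 2 - 1 / p := by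
      rw [hGsplit]; linarith [sq_nonneg (t - s)]
    have hCS : c ≤ a * r := real_inner_le_norm E u
    have hslack : 0 ≤ t * a ^ (p - 2) * (a * r - c) :=
      mul_nonneg (mul_nonneg ht hap2.le) (by linarith)
    refine ⟨by rw [hmain]; linarith [mul_nonneg hapos.le hG], ?_⟩
    intro hne
    rw [hmain]
    by_cases hs1 : s = 1
    · -- r = a; split on t
      by_cases ht1 : t = 1
      · -- equality case would force E = u, contradicting hne; CS is strict
        have hra : r = a := by rw [hrs, hs1, one_mul]
        have hclt : c < a * r := by
          rcases lt_or_eq_of_le hCS with h | h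
          · exact h
          · exfalso
            have hsm : ‖u‖ • E = ‖E‖ • u := inner_eq_norm_mul_iff_real.mp h
            rw [← hrr, ← haa, hra] at hsm
            have hEu : E = u := smul_right_injective _ ha.ne' hsm
            exact hne hEu
        have hstrict : 0 < t * a ^ (p - 2) * (a * r - c) := by
          rw [ht1, one_mul]
          exact mul_pos hap2 (by linarith)
        linarith [mul_nonneg hapos.le hG]
      · -- s = 1, t ≠ 1 : G = (t-1)²/2 > 0
        have hGpos : 0 < s ^ p / p - t * s + (t ^ 2 + 1) / 2 - 1 / p := by
          rw [hs1, Real.one_rpow]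
          have htne : t - 1 ≠ 0 := sub_ne_zero_of_ne ht1
          have hsq : 0 < (t - 1) ^ 2 :=
            lt_of_le_of_ne (sq_nonneg _) (Ne.symm (pow_ne_zero 2 htne))
          linarith [hsq]
        linarith [mul_pos hapos hGpos, mul_nonneg hapos.le hG]
    · -- s ≠ 1 : k(s) > 0
      have hkpos : 0 < s ^ p / p - s ^ 2 / 2 + 1 / 2 - 1 / p := by
        have h := aux_k_pos hp hs0 hs1
        have h2 : 0 < (s ^ p - (1 + p / 2 * (s ^ 2 - 1))) / p :=
          div_pos (by linarith) hp0
        have h3 : (s ^ p - (1 + p / 2 * (s ^ 2 - 1))) / p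
            = s ^ p / p - s ^ 2 / 2 + 1 / 2 - 1 / p := by
          field_simp
          ring
        linarith [h3 ▸ h2]
      have hGpos : 0 < s ^ p / p - t * s + (t ^ 2 + 1) / 2 - 1 / p := by
        rw [hGsplit]; linarith [sq_nonneg (t - s)]
      linarith [mul_pos hapos hGpos, mul_nonneg hapos.le hG]
end

section
/- Let X = X⁺ ⊕ X̃ with X⁺ a Hilbert space, and J(u) = (1/2)‖u⁺‖² - I(u) with I ≥ 0. Suppose u is a critical point of J constrained to a set 𝒩 and satisfies, for all t ≥ 0 and ṽ ∈ X̃ with u ≠ tu + ṽ: ((t²-1)/2)I'(u)(u) + tI'(u)(ṽ) + I(u) - I(tu + ṽ) < 0. Then J(u) > J(tu + ṽ) for all t ≥ 0, ṽ ∈ X̃ with tu + ṽ ≠ u, i.e., u is the unique global maximum of J restricted to ℝ⁺u ⊕ X̃. -/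
open RealInnerProductSpace

/-- Uniqueness of the maximum in Proposition 3.1: if `J(u) = ½‖u⁺‖² - I(u)`, `u` is a
critical point of `J` restricted to `ℝu ⊕ X̃` (here `X̃ = X⁺ᗮ`, `u⁺` the orthogonal
projection onto `X⁺`), and condition (B3) holds at `u`, then `u` is the unique global
maximum of `J` on `ℝ⁺u ⊕ X̃`. -/
theorem stmt13 {X : Type*} [NormedAddCommGroup X] [InnerProductSpace ℝ X]
    (Xp : Submodule ℝ X) [Xp.HasOrthogonalProjection]
    (I : X → ℝ) (I' : X → X →L[ℝ] ℝ) (hI : ∀ u, HasFDerivAt I (I' u) u)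
    (hIpos : ∀ u, 0 ≤ I u)
    (J : X → ℝ)
    (hJ : ∀ u : X, J u = 1 / 2 * ‖(Xp.orthogonalProjectionOnto u : X)‖ ^ 2 - I u)
    (u : X)
    (hB3 : ∀ t : ℝ, 0 ≤ t → ∀ v ∈ Xpᗮ, u ≠ t • u + v →
      (t ^ 2 - 1) / 2 * I' u u + t * I' u v + I u - I (t • u + v) < 0)
    (hcrit1 : ‖(Xp.orthogonalProjectionOnto u : X)‖ ^ 2 = I' u u)
    (hcrit2 : ∀ v ∈ Xpᗮ, I' u v = 0) :
    ∀ t : ℝ, 0 ≤ t → ∀ v ∈ Xpᗮ, t • u + v ≠ u → J (t • u + v) < J u := by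
  intro t ht v hv hne
  have hPv : (Xp.orthogonalProjectionOnto v : X) = 0 := by
    exact congrArg Subtype.val (Submodule.orthogonalProjectionOnto_apply_of_mem_orthogonal hv)
  have hP : (Xp.orthogonalProjectionOnto (t • u + v) : X)
      = t • (Xp.orthogonalProjectionOnto u : X) := by
    rw [map_add, map_smul]
    push_cast [hPv]
    simp
  have key := hB3 t ht v hv (Ne.symm hne)
  rw [hcrit2 v hv] at key
  have hnorm : ‖(Xp.orthogonalProjectionOnto (t • u + v) : X)‖ ^ 2
      = t ^ 2 * ‖(Xp.orthogonalProjectionOnto u : X)‖ ^ 2 := by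
    rw [hP, norm_smul, mul_pow, Real.norm_eq_abs, sq_abs]
  rw [hJ, hJ, hnorm, hcrit1]
  nlinarith [key]
end

section
/- Suppose J_λ(u) = (1/2)‖u⁺‖² - I_λ(u) is a family of functionals on a Banach space X = X⁺ ⊕ X̃ indexed by λ ∈ I ⊂ ℝ, satisfying 0 < J_{λ₁}(u) - J_{λ₂}(u) ≤ L(λ₁ - λ₂)‖u‖² for λ₁ > λ₂ in I and u ∈ X \ X̃. Then the ground state level map λ ↦ c_λ := inf_{𝒩_λ} J_λ is non-decreasing on I; moreover if c_{λ₂} is attained for every λ ∈ I, then λ ↦ c_λ is strictly increasing. -/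
lemma stmt14_key {X : Type*} [NormedAddCommGroup X] [Module ℝ X]
    (Xt : Submodule ℝ X) (I : Set ℝ) (L : ℝ)
    (J : ℝ → X → ℝ) (N : ℝ → Set X) (c : ℝ → ℝ)
    (hN : ∀ l ∈ I, ∀ u ∈ N l, u ∉ Xt)
    (hgap : ∀ l₁ ∈ I, ∀ l₂ ∈ I, l₂ < l₁ → ∀ u : X, u ∉ Xt →
      0 < J l₁ u - J l₂ u ∧ J l₁ u - J l₂ u ≤ L * (l₁ - l₂) * ‖u‖ ^ 2)
    (hmax : ∀ l ∈ I, ∀ u ∈ N l, ∀ t : ℝ, 0 ≤ t → ∀ v ∈ Xt, J l (t • u + v) ≤ J l u)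
    (hproj : ∀ l ∈ I, ∀ u : X, u ∉ Xt → ∃ t : ℝ, 0 ≤ t ∧ ∃ v ∈ Xt, t • u + v ∈ N l)
    (hc : ∀ l ∈ I, IsGLB (J l '' N l) (c l))
    {l₁ l₂ : ℝ} (h₁ : l₁ ∈ I) (h₂ : l₂ ∈ I) (hlt : l₂ < l₁) :
    ∀ u ∈ N l₁, c l₂ < J l₁ u := by
  intro u hu
  obtain ⟨t, ht, v, hv, hw⟩ := hproj l₂ h₂ u (hN l₁ h₁ u hu)
  have hwX : t • u + v ∉ Xt := hN l₂ h₂ _ hw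
  calc c l₂ ≤ J l₂ (t • u + v) := (hc l₂ h₂).1 ⟨_, hw, rfl⟩
    _ < J l₁ (t • u + v) := by
        have := (hgap l₁ h₁ l₂ h₂ hlt _ hwX).1; linarith
    _ ≤ J l₁ u := hmax l₁ h₁ u hu t ht v hv

/-- Monotonicity of ground state levels (Theorem 3.4): for a family `J_λ` with
`0 < J_{λ₁} - J_{λ₂} ≤ L(λ₁-λ₂)‖u‖²` off `X̃` for `λ₁ > λ₂`, Nehari–Pankov manifolds
`𝒩_λ ⊆ X \ X̃` on which every point maximizes `J_λ` over its cone `ℝ⁺u ⊕ X̃`, and such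
that every `u ∉ X̃` projects into each `𝒩_λ`, the levels `c_λ = inf_{𝒩_λ} J_λ` are
non-decreasing in `λ`; if moreover every `c_λ` is attained, they are strictly increasing. -/
theorem stmt14 {X : Type*} [NormedAddCommGroup X] [Module ℝ X]
    (Xt : Submodule ℝ X) (I : Set ℝ) (L : ℝ) (hL : 0 < L)
    (J : ℝ → X → ℝ) (N : ℝ → Set X) (c : ℝ → ℝ)
    (hN : ∀ l ∈ I, ∀ u ∈ N l, u ∉ Xt)
    (hgap : ∀ l₁ ∈ I, ∀ l₂ ∈ I, l₂ < l₁ → ∀ u : X, u ∉ Xt →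
      0 < J l₁ u - J l₂ u ∧ J l₁ u - J l₂ u ≤ L * (l₁ - l₂) * ‖u‖ ^ 2)
    (hmax : ∀ l ∈ I, ∀ u ∈ N l, ∀ t : ℝ, 0 ≤ t → ∀ v ∈ Xt, J l (t • u + v) ≤ J l u)
    (hproj : ∀ l ∈ I, ∀ u : X, u ∉ Xt → ∃ t : ℝ, 0 ≤ t ∧ ∃ v ∈ Xt, t • u + v ∈ N l)
    (hc : ∀ l ∈ I, IsGLB (J l '' N l) (c l)) :
    (∀ l₁ ∈ I, ∀ l₂ ∈ I, l₂ ≤ l₁ → c l₂ ≤ c l₁) ∧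
      ((∀ l ∈ I, ∃ u ∈ N l, J l u = c l) →
        ∀ l₁ ∈ I, ∀ l₂ ∈ I, l₂ < l₁ → c l₂ < c l₁) := by
  constructor
  · intro l₁ h₁ l₂ h₂ hle
    rcases eq_or_lt_of_le hle with rfl | hlt
    · exact le_rfl
    · refine (hc l₁ h₁).2 ?_
      rintro x ⟨u, hu, rfl⟩
      exact (stmt14_key Xt I L J N c hN hgap hmax hproj hc h₁ h₂ hlt u hu).le
  · intro hatt l₁ h₁ l₂ h₂ hlt
    obtain ⟨u, hu, hJu⟩ := hatt l₁ h₁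
    rw [← hJu]
    exact stmt14_key Xt I L J N c hN hgap hmax hproj hc h₁ h₂ hlt u hu
end

section
/- Let H be a Hilbert space with norm ‖·‖, |·|_p a weaker norm with ‖u‖² ≥ S|u|_p² for all u (S > 0), and p > 2. Suppose (F_n) ⊂ H satisfies J₀'(F_n)(F_n) := ‖F_n‖² - |F_n|_p^p → 0, inf_n ‖F_n‖ > 0 and inf_n |F_n|_p > 0, and (F_n) is bounded. Then liminf_n sup_{t≥0} [(t²/2)‖F_n‖² - (t^p/p)|F_n|_p^p] ≥ (1/2 - 1/p) S^{p/(p-2)}. -/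
open Filter Topology

set_option maxHeartbeats 1600000 in
/-- Quantitative step of Lemma 4.9: if `‖F_n‖² - |F_n|_p^p → 0`, with `‖F_n‖` and `|F_n|_p`
bounded away from `0`, `(F_n)` bounded, and `‖u‖² ≥ S|u|_p²` (`S > 0`, `p > 2`), then
`liminf_n sup_{t ≥ 0} [(t²/2)‖F_n‖² - (t^p/p)|F_n|_p^p] ≥ (1/2 - 1/p) S^{p/(p-2)}`. -/
theorem stmt18 {H : Type*} [NormedAddCommGroup H] (p S : ℝ) (hp : 2 < p) (hS : 0 < S)
    (Np : H → ℝ) (hNp : ∀ u, 0 ≤ Np u)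
    (hSob : ∀ u : H, S * Np u ^ 2 ≤ ‖u‖ ^ 2)
    (F : ℕ → H)
    (h0 : Tendsto (fun n => ‖F n‖ ^ 2 - Np (F n) ^ p) atTop (𝓝 0))
    (δ₁ : ℝ) (hδ₁ : 0 < δ₁) (hFn : ∀ n, δ₁ ≤ ‖F n‖)
    (δ₂ : ℝ) (hδ₂ : 0 < δ₂) (hFn' : ∀ n, δ₂ ≤ Np (F n))
    (M : ℝ) (hM : ∀ n, ‖F n‖ ≤ M) :
    (1 / 2 - 1 / p) * S ^ (p / (p - 2)) ≤
      atTop.liminf (fun n => sSup {y : ℝ | ∃ t : ℝ, 0 ≤ t ∧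
        y = t ^ 2 / 2 * ‖F n‖ ^ 2 - t ^ p / p * Np (F n) ^ p}) := by
  have hp0 : (0:ℝ) < p := by linarith
  have hq : (0:ℝ) < p - 2 := by linarith
  have hM0 : 0 < M := lt_of_lt_of_le hδ₁ ((hFn 0).trans (hM 0))
  have hδ₂p : (0:ℝ) < δ₂ ^ p := Real.rpow_pos_of_pos hδ₂ p
  set X : ℝ := p * M ^ 2 / δ₂ ^ p with hX
  have hXpos : 0 < X := by positivity
  set T : ℝ := X ^ (1 / (p - 2)) with hTdef
  have hT0 : 0 < T := Real.rpow_pos_of_pos hXpos _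
  have hTpow : T ^ (p - 2) = X := by
    rw [hTdef, ← Real.rpow_mul hXpos.le, one_div_mul_cancel hq.ne', Real.rpow_one]
  set C : ℝ := T ^ 2 * M ^ 2 / 2 with hC
  have hC0 : 0 ≤ C := by positivity
  set c : ℝ := (1 / 2 - 1 / p) * S ^ (p / (p - 2)) with hc
  set u : ℕ → ℝ := fun n => sSup {y : ℝ | ∃ t : ℝ, 0 ≤ t ∧
        y = t ^ 2 / 2 * ‖F n‖ ^ 2 - t ^ p / p * Np (F n) ^ p} with hu
  -- uniform upper bound on each set
  have hub : ∀ n, ∀ y ∈ {y : ℝ | ∃ t : ℝ, 0 ≤ t ∧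
      y = t ^ 2 / 2 * ‖F n‖ ^ 2 - t ^ p / p * Np (F n) ^ p}, y ≤ C := by
    intro n y hy
    obtain ⟨t, ht, rfl⟩ := hy
    have hw : 0 < Np (F n) := lt_of_lt_of_le hδ₂ (hFn' n)
    have hb : 0 < Np (F n) ^ p := Real.rpow_pos_of_pos hw p
    have hbδ : δ₂ ^ p ≤ Np (F n) ^ p := Real.rpow_le_rpow hδ₂.le (hFn' n) hp0.le
    have ha : 0 < ‖F n‖ ^ 2 := by nlinarith [hFn n, hδ₁]
    have haM : ‖F n‖ ^ 2 ≤ M ^ 2 := by nlinarith [hM n, hFn n, hδ₁]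
    rcases le_or_gt t T with hcase | hcase
    · have h1 : t ^ 2 ≤ T ^ 2 := by nlinarith
      have h2 : 0 ≤ t ^ p / p * Np (F n) ^ p := by
        have := Real.rpow_nonneg ht p; positivity
      rw [hC]
      nlinarith [mul_le_mul h1 haM ha.le (sq_nonneg T), h2]
    · have ht0 : 0 < t := hT0.trans hcase
      have htp : t ^ p = t ^ 2 * t ^ (p - 2) := by
        rw [← Real.rpow_natCast t 2, ← Real.rpow_add ht0]
        norm_num
      have h3 : X ≤ t ^ (p - 2) := by
        rw [← hTpow]
        exact Real.rpow_le_rpow hT0.le hcase.le hq.le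
      have h4 : p * ‖F n‖ ^ 2 ≤ X * Np (F n) ^ p := by
        rw [hX, div_mul_eq_mul_div, le_div_iff₀ hδ₂p]
        have h4a : ‖F n‖ ^ 2 * δ₂ ^ p ≤ M ^ 2 * Np (F n) ^ p :=
          mul_le_mul haM hbδ hδ₂p.le (by positivity)
        nlinarith [h4a, hp0]
      have h5 : t ^ 2 * (p * ‖F n‖ ^ 2) ≤ t ^ p * Np (F n) ^ p := by
        rw [htp, mul_assoc]
        have h3b : X * Np (F n) ^ p ≤ t ^ (p - 2) * Np (F n) ^ p :=
          mul_le_mul_of_nonneg_right h3 hb.le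
        exact mul_le_mul_of_nonneg_left (h4.trans h3b) (sq_nonneg t)
      have h7 : t ^ 2 * ‖F n‖ ^ 2 ≤ t ^ p / p * Np (F n) ^ p := by
        rw [div_mul_eq_mul_div, le_div_iff₀ hp0]
        nlinarith [h5]
      nlinarith [h7, hC0, mul_nonneg (sq_nonneg t) ha.le]
  -- lower bound : each sSup ≥ c
  have hlow : ∀ n, c ≤ u n := by
    intro n
    have hw : 0 < Np (F n) := lt_of_lt_of_le hδ₂ (hFn' n)
    have hb : 0 < Np (F n) ^ p := Real.rpow_pos_of_pos hw p
    have ha : 0 < ‖F n‖ ^ 2 := by nlinarith [hFn n, hδ₁]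
    set a : ℝ := ‖F n‖ ^ 2 with hadef
    set b : ℝ := Np (F n) ^ p with hbdef
    set r : ℝ := a / b with hr
    have hrpos : 0 < r := div_pos ha hb
    set t₀ : ℝ := r ^ (1 / (p - 2)) with ht₀
    have ht₀pos : 0 < t₀ := Real.rpow_pos_of_pos hrpos _
    have h2 : t₀ ^ 2 = r ^ (2 / (p - 2)) := by
      rw [ht₀, ← Real.rpow_natCast (r ^ (1 / (p - 2))), ← Real.rpow_mul hrpos.le]
      congr 1
      ring
    have hpexp : t₀ ^ p = r ^ (2 / (p - 2)) * r := by
      have hexp : 1 / (p - 2) * p = 2 / (p - 2) + 1 := by field_simp; ring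
      rw [ht₀, ← Real.rpow_mul hrpos.le, hexp, Real.rpow_add hrpos, Real.rpow_one]
    have hrb : r * b = a := div_mul_cancel₀ a hb.ne'
    have hval : t₀ ^ 2 / 2 * a - t₀ ^ p / p * b = (1 / 2 - 1 / p) * (r ^ (2 / (p - 2)) * a) := by
      rw [h2, hpexp]
      linear_combination -(r ^ (2 / (p - 2)) / p) * hrb
    -- key inequality : S ^ (p/(p-2)) ≤ r ^ (2/(p-2)) * a
    have hkey : S ^ (p / (p - 2)) ≤ r ^ (2 / (p - 2)) * a := by
      have hsob : S ≤ a / Np (F n) ^ 2 := by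
        rw [le_div_iff₀ (by positivity)]
        have := hSob (F n)
        nlinarith
      have hq2 : (0:ℝ) ≤ p / (p - 2) := by positivity
      have step1 : S ^ (p / (p - 2)) ≤ (a / Np (F n) ^ 2) ^ (p / (p - 2)) :=
        Real.rpow_le_rpow hS.le hsob hq2
      refine step1.trans_eq ?_
      have hw2 : (0:ℝ) < Np (F n) ^ 2 := by positivity
      rw [Real.div_rpow ha.le hw2.le, hr, hbdef, Real.div_rpow ha.le hb.le]
      rw [← Real.rpow_natCast (Np (F n)) 2, ← Real.rpow_mul hw.le, ← Real.rpow_mul hw.le]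
      rw [div_mul_eq_mul_div, div_eq_div_iff (by positivity) (by positivity)]
      have he1 : a ^ (2 / (p - 2)) * a = a ^ (p / (p - 2)) := by
        nth_rewrite 2 [← Real.rpow_one a]
        rw [← Real.rpow_add ha]
        congr 1
        field_simp
        ring
      have he2 : ((2:ℕ):ℝ) * (p / (p - 2)) = p * (2 / (p - 2)) := by push_cast; ring
      rw [he2, he1]
    have hmem : (1 / 2 - 1 / p) * (r ^ (2 / (p - 2)) * a) ∈ {y : ℝ | ∃ t : ℝ, 0 ≤ t ∧
        y = t ^ 2 / 2 * ‖F n‖ ^ 2 - t ^ p / p * Np (F n) ^ p} :=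
      ⟨t₀, ht₀pos.le, hval.symm⟩
    have hbdd : BddAbove {y : ℝ | ∃ t : ℝ, 0 ≤ t ∧
        y = t ^ 2 / 2 * ‖F n‖ ^ 2 - t ^ p / p * Np (F n) ^ p} := ⟨C, fun y hy => hub n y hy⟩
    refine le_trans ?_ (le_csSup hbdd hmem)
    rw [hc]
    have hhalf : (0:ℝ) ≤ 1 / 2 - 1 / p := by
      rw [sub_nonneg, div_le_div_iff₀ hp0 two_pos]; linarith
    exact mul_le_mul_of_nonneg_left hkey hhalf
  have hupp : ∀ n, u n ≤ C := by
    intro n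
    have hne : {y : ℝ | ∃ t : ℝ, 0 ≤ t ∧
        y = t ^ 2 / 2 * ‖F n‖ ^ 2 - t ^ p / p * Np (F n) ^ p}.Nonempty :=
      ⟨0 ^ 2 / 2 * ‖F n‖ ^ 2 - (0:ℝ) ^ p / p * Np (F n) ^ p, 0, le_refl 0, rfl⟩
    exact csSup_le hne (hub n)
  exact Filter.le_liminf_of_le ((Filter.isBoundedUnder_of ⟨C, hupp⟩).isCoboundedUnder_ge)
    (Filter.Eventually.of_forall hlow)
end
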